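/- In the Poincaré half-space model of ℍⁿ with distance d(x,y) = 2 arcsinh(‖x − y‖_e / (2√(x_n y_n))), for the vertical geodesic line r(x̂₀) = {(x̂, x_n) : x̂ = x̂₀, x_n > 0} and any t > 0, the closed t-neighborhood of r(x̂₀) is the cone {(x̂, x_n) ∈ ℍⁿ : ‖x̂ − x̂₀‖_e ≤ sinh(t) · x_n}. -/

import Mathlib

open Set

/-- The hyperbolic distance in the Poincaré half-space model, where a point is
a pair `(x̂, x_n) ∈ ℝ^{m} × ℝ` (the model being `ℍ^{m+1}`, so `m = n - 1`):
`d(x,y) = 2 arcsinh(‖x - y‖_e / (2√(x_n y_n)))`. -/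
noncomputable def hdist {m : ℕ} (x y : EuclideanSpace ℝ (Fin m) × ℝ) : ℝ :=
  2 * Real.arsinh
    (Real.sqrt (‖x.1 - y.1‖ ^ 2 + (x.2 - y.2) ^ 2) / (2 * Real.sqrt (x.2 * y.2)))

/-- sinh of the model distance, as an explicit algebraic expression. -/
lemma sinh_hd (a h s : ℝ) (hh : 0 < h) (hs : 0 < s) :
    Real.sinh (2 * Real.arsinh
        (Real.sqrt (a ^ 2 + (h - s) ^ 2) / (2 * Real.sqrt (h * s)))) =
      Real.sqrt ((a ^ 2 + (h - s) ^ 2) * (a ^ 2 + (h + s) ^ 2)) / (2 * (h * s)) := by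
  have hhs : 0 < h * s := mul_pos hh hs
  have hA : (0:ℝ) ≤ a ^ 2 + (h - s) ^ 2 := by positivity
  have hB : (0:ℝ) ≤ a ^ 2 + (h + s) ^ 2 := by positivity
  set u : ℝ := Real.sqrt (a ^ 2 + (h - s) ^ 2) / (2 * Real.sqrt (h * s)) with hu
  have hsq : Real.sqrt (h * s) ^ 2 = h * s := Real.sq_sqrt hhs.le
  have hsqpos : 0 < Real.sqrt (h * s) := Real.sqrt_pos.2 hhs
  have hu2 : u ^ 2 = (a ^ 2 + (h - s) ^ 2) / (4 * (h * s)) := by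
    rw [hu, div_pow, Real.sq_sqrt hA, mul_pow, hsq]; norm_num
  have h1u : 1 + u ^ 2 = (a ^ 2 + (h + s) ^ 2) / (4 * (h * s)) := by
    rw [hu2]; field_simp; ring
  have h4 : Real.sqrt (4 * (h * s)) = 2 * Real.sqrt (h * s) := by
    rw [show (4:ℝ) * (h * s) = (2 * Real.sqrt (h * s)) ^ 2 by rw [mul_pow, hsq]; ring]
    exact Real.sqrt_sq (by positivity)
  rw [Real.sinh_two_mul, Real.sinh_arsinh, Real.cosh_arsinh, h1u,
    Real.sqrt_div hB _, h4, Real.sqrt_mul hA, hu]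
  have hsq2 : Real.sqrt h ^ 2 * Real.sqrt s ^ 2 = h * s := by
    rw [Real.sq_sqrt hh.le, Real.sq_sqrt hs.le]
  field_simp
  linear_combination -Real.sqrt (a ^ 2 + (h - s) ^ 2) * hsq

/-- Lower bound: the distance to any point of the vertical line is at least
`arsinh (a / h)`. -/
lemma hd_lb (a h s : ℝ) (ha : 0 ≤ a) (hh : 0 < h) (hs : 0 < s) :
    Real.arsinh (a / h) ≤ 2 * Real.arsinh
      (Real.sqrt (a ^ 2 + (h - s) ^ 2) / (2 * Real.sqrt (h * s))) := by
  set d : ℝ := 2 * Real.arsinh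
      (Real.sqrt (a ^ 2 + (h - s) ^ 2) / (2 * Real.sqrt (h * s))) with hd
  have key : a / h ≤ Real.sinh d := by
    rw [hd, sinh_hd a h s hh hs]
    have h2as : 2 * a * s ≤ Real.sqrt ((a ^ 2 + (h - s) ^ 2) * (a ^ 2 + (h + s) ^ 2)) := by
      apply Real.le_sqrt_of_sq_le
      nlinarith [sq_nonneg (a ^ 2 + h ^ 2 - s ^ 2), sq_nonneg (a * (h - s)), sq_nonneg (a * (h + s))]
    rw [div_le_div_iff₀ hh (by positivity)]
    calc a * (2 * (h * s)) = (2 * a * s) * h := by ring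
      _ ≤ _ := by nlinarith [h2as]
  calc Real.arsinh (a / h) ≤ Real.arsinh (Real.sinh d) := Real.arsinh_le_arsinh.2 key
    _ = d := Real.arsinh_sinh d

/-- At `s = √(a² + h²)` the distance equals `arsinh (a / h)`. -/
lemma hd_eq (a h : ℝ) (ha : 0 ≤ a) (hh : 0 < h) :
    2 * Real.arsinh (Real.sqrt (a ^ 2 + (h - Real.sqrt (a ^ 2 + h ^ 2)) ^ 2) /
        (2 * Real.sqrt (h * Real.sqrt (a ^ 2 + h ^ 2)))) = Real.arsinh (a / h) := by
  set s : ℝ := Real.sqrt (a ^ 2 + h ^ 2) with hsdef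
  have hs : 0 < s := Real.sqrt_pos.2 (by positivity)
  have hs2 : s ^ 2 = a ^ 2 + h ^ 2 := Real.sq_sqrt (by positivity)
  set d : ℝ := 2 * Real.arsinh
      (Real.sqrt (a ^ 2 + (h - s) ^ 2) / (2 * Real.sqrt (h * s))) with hd
  have key : Real.sinh d = a / h := by
    rw [hd, sinh_hd a h s hh hs]
    have hAB : (a ^ 2 + (h - s) ^ 2) * (a ^ 2 + (h + s) ^ 2) = (2 * a * s) ^ 2 := by
      nlinarith [hs2]
    rw [hAB, Real.sqrt_sq (by positivity)]
    field_simp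
  calc d = Real.arsinh (Real.sinh d) := (Real.arsinh_sinh d).symm
    _ = Real.arsinh (a / h) := by rw [key]

/-- The closed `t`-neighborhood of the vertical geodesic line `r(x̂₀)` in the
half-space model is the cone `{‖x̂ - x₀‖ ≤ sinh(t) · x_n}`. -/
theorem stmt_12 (m : ℕ) (x₀ : EuclideanSpace ℝ (Fin m)) (t : ℝ) (ht : 0 < t) :
    {x : EuclideanSpace ℝ (Fin m) × ℝ | 0 < x.2 ∧
        sInf {d : ℝ | ∃ s : ℝ, 0 < s ∧ d = hdist x (x₀, s)} ≤ t} =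
      {x : EuclideanSpace ℝ (Fin m) × ℝ | 0 < x.2 ∧
        ‖x.1 - x₀‖ ≤ Real.sinh t * x.2} := by
  ext x
  simp only [mem_setOf_eq]
  set a : ℝ := ‖x.1 - x₀‖ with hadef
  have ha : 0 ≤ a := norm_nonneg _
  constructor
  · rintro ⟨hx, hinf⟩
    refine ⟨hx, ?_⟩
    have hlb : ∀ d ∈ {d : ℝ | ∃ s : ℝ, 0 < s ∧ d = hdist x (x₀, s)},
        Real.arsinh (a / x.2) ≤ d := by
      rintro d ⟨s, hs, rfl⟩
      simpa [hdist] using hd_lb a x.2 s ha hx hs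
    have hne : Set.Nonempty {d : ℝ | ∃ s : ℝ, 0 < s ∧ d = hdist x (x₀, s)} :=
      ⟨hdist x (x₀, x.2), x.2, hx, rfl⟩
    have h1 : Real.arsinh (a / x.2) ≤ t := (le_csInf hne hlb).trans hinf
    have h2 : a / x.2 ≤ Real.sinh t := by
      calc a / x.2 = Real.sinh (Real.arsinh (a / x.2)) := (Real.sinh_arsinh _).symm
        _ ≤ Real.sinh t := Real.sinh_le_sinh.2 h1
    exact (div_le_iff₀ hx).1 h2
  · rintro ⟨hx, hle⟩
    refine ⟨hx, ?_⟩
    have hlb : ∀ d ∈ {d : ℝ | ∃ s : ℝ, 0 < s ∧ d = hdist x (x₀, s)},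
        Real.arsinh (a / x.2) ≤ d := by
      rintro d ⟨s, hs, rfl⟩
      simpa [hdist] using hd_lb a x.2 s ha hx hs
    have hbdd : BddBelow {d : ℝ | ∃ s : ℝ, 0 < s ∧ d = hdist x (x₀, s)} :=
      ⟨Real.arsinh (a / x.2), hlb⟩
    set s : ℝ := Real.sqrt (a ^ 2 + x.2 ^ 2) with hsdef
    have hs : 0 < s := Real.sqrt_pos.2 (by positivity)
    have hmem : hdist x (x₀, s) ∈ {d : ℝ | ∃ s : ℝ, 0 < s ∧ d = hdist x (x₀, s)} :=
      ⟨s, hs, rfl⟩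
    have heq : hdist x (x₀, s) = Real.arsinh (a / x.2) := by
      simpa only [hdist] using hd_eq a x.2 ha hx
    have hlet : hdist x (x₀, s) ≤ t := by
      rw [heq]
      calc Real.arsinh (a / x.2) ≤ Real.arsinh (Real.sinh t) :=
            Real.arsinh_le_arsinh.2 ((div_le_iff₀ hx).2 hle)
        _ = t := Real.arsinh_sinh t
    exact csInf_le_of_le hbdd hmem hlet
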